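/- arXiv:math/9705211 — 2 statements merged into one kernel-verified Lean document; each statement's English description precedes it below -/
import Mathlib

section
/- Let H be a Hilbert space and T, S ∈ B(H) with ST = I. If for every injective compact operator A the operator TAS is also injective, then TS = I (so S = T⁻¹). -/
open Filter Topology Finset

local notation "⟪" x ", " y "⟫" => @inner ℂ _ _ x y

/-- Any continuous linear functional (to a proper space) is a compact operator. -/
private lemma aux_clm_to_scalar_compact {H : Type*} [NormedAddCommGroup H] [NormedSpace ℂ H]
    (f : H →L[ℂ] ℂ) : IsCompactOperator f := by
  refine ⟨Metric.closedBall 0 ‖f‖, isCompact_closedBall 0 ‖f‖, ?_⟩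
  refine Filter.mem_of_superset (Metric.closedBall_mem_nhds (0 : H) one_pos) ?_
  intro x hx
  simp only [Set.mem_preimage, Metric.mem_closedBall, dist_zero_right] at *
  calc ‖f x‖ ≤ ‖f‖ * ‖x‖ := f.le_opNorm x
    _ ≤ ‖f‖ * 1 := by gcongr
    _ = ‖f‖ := mul_one _

private lemma aux_rank_one_compact {H : Type*} [NormedAddCommGroup H] [InnerProductSpace ℂ H]
    (v : H) : IsCompactOperator ((innerSL ℂ v).smulRight v) := by
  have h1 := (aux_clm_to_scalar_compact (innerSL ℂ v)).clm_comp
    (ContinuousLinearMap.toSpanSingleton ℂ v)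
  have : (⇑(ContinuousLinearMap.toSpanSingleton ℂ v) ∘ ⇑(innerSL ℂ v))
      = ⇑((innerSL ℂ v).smulRight v) := by
    funext x
    simp [ContinuousLinearMap.toSpanSingleton_apply]
  rwa [this] at h1

set_option maxHeartbeats 1000000 in
theorem stmt5 {H : Type*} [NormedAddCommGroup H] [InnerProductSpace ℂ H]
    [CompleteSpace H] [TopologicalSpace.SeparableSpace H] (hinf : ¬ FiniteDimensional ℂ H)
    (T S : H →L[ℂ] H) (hST : S ∘L T = 1)
    (h : ∀ A : H →L[ℂ] H, IsCompactOperator A → Function.Injective A →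
      Function.Injective (T ∘L A ∘L S)) :
    T ∘L S = 1 := by
  classical
  -- get a Hilbert basis
  obtain ⟨w, b, hb⟩ := exists_hilbertBasis ℂ H
  -- `w` is countable
  obtain ⟨D, hDc, hDd⟩ := TopologicalSpace.exists_countable_dense H
  have hw_orth : Orthonormal ℂ ((↑) : w → H) := by
    rw [← hb]; exact b.orthonormal
  have hw_sep : ∀ x ∈ w, ∀ y ∈ w, x ≠ y → (1 : ℝ) ≤ dist x y := by
    intro x hx y hy hxy
    have h0 : ⟪x, y⟫ = 0 := hw_orth.2 (i := ⟨x, hx⟩) (j := ⟨y, hy⟩) (by simpa using hxy)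
    have hx1 : ‖x‖ = 1 := by simpa using hw_orth.1 ⟨x, hx⟩
    have hy1 : ‖y‖ = 1 := by simpa using hw_orth.1 ⟨y, hy⟩
    have hsq : ‖x - y‖ ^ 2 = 2 := by
      rw [@norm_sub_sq ℂ, h0, hx1, hy1]; norm_num
    rw [dist_eq_norm]
    nlinarith [norm_nonneg (x - y)]
  have hw_count : Countable w := by
    choose g hg1 hg2 using fun x : H => Metric.mem_closure_iff.mp (hDd x) (1/2) (by norm_num)
    have hginj : Function.Injective (fun x : w => (⟨g x, hg1 x⟩ : D)) := by
      intro x y hxy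
      by_contra hne
      have hne' : (x : H) ≠ (y : H) := fun hc => hne (Subtype.ext hc)
      have h1 := hw_sep x x.2 y y.2 hne'
      have h2 := hg2 (x : H)
      have h3 := hg2 (y : H)
      have hgg : g (x : H) = g (y : H) := congrArg Subtype.val hxy
      have h4 : dist (x : H) (y : H) ≤ dist (x : H) (g (x : H)) + dist (g (y : H)) (y : H) := by
        rw [hgg]; exact dist_triangle _ _ _
      have h5 : dist (g (y : H)) (y : H) = dist (y : H) (g (y : H)) := dist_comm _ _
      linarith
    have : Countable D := hDc.to_subtype
    exact Function.Injective.countable hginj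
  -- `w` is infinite
  have hw_inf : Infinite w := by
    rw [Set.infinite_coe_iff]
    intro hfin
    apply hinf
    have hfd : FiniteDimensional ℂ (Submodule.span ℂ w) := FiniteDimensional.span_of_finite ℂ hfin
    have hclosed : IsClosed ((Submodule.span ℂ w : Submodule ℂ H) : Set H) :=
      Submodule.closed_of_finiteDimensional _
    have hdense := b.dense_span
    rw [hb, Subtype.range_coe] at hdense
    rw [hclosed.submodule_topologicalClosure_eq] at hdense
    rw [hdense] at hfd
    exact (Submodule.topEquiv (R := ℂ) (M := H)).finiteDimensional
  have hden : Nonempty (Denumerable w) := nonempty_denumerable_iff.mpr ⟨hw_count, hw_inf⟩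
  obtain ⟨v, hv_orth, hv_total⟩ : ∃ v : ℕ → H, Orthonormal ℂ v ∧
      ∀ x : H, (∀ n, ⟪v n, x⟫ = 0) → x = 0 := by
    let e : ℕ ≃ w := (@Denumerable.eqv w hden.some).symm
    refine ⟨fun n => b (e n), b.orthonormal.comp e e.injective, ?_⟩
    intro x hx
    have hall : ∀ i : w, ⟪b i, x⟫ = 0 := fun i => by
      simpa [Equiv.apply_symm_apply] using hx (e.symm i)
    have hrepr : b.repr x = 0 := by
      ext i
      rw [b.repr_apply_apply]
      simpa using hall i
    have := congrArg b.repr.symm hrepr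
    simpa using this
  clear hb hw_orth hw_sep hden b
  -- define the compact diagonal operator
  obtain ⟨f, hf_def⟩ : ∃ f : ℕ → (H →L[ℂ] H),
      f = fun n => ((1/2 : ℝ) ^ n) • ((innerSL ℂ (v n)).smulRight (v n)) := ⟨_, rfl⟩
  have hvnorm : ∀ n, ‖v n‖ = 1 := fun n => hv_orth.1 n
  have hfnorm : ∀ n, ‖f n‖ ≤ (1/2 : ℝ) ^ n := by
    intro n
    rw [hf_def]
    simp only [norm_smul, Real.norm_eq_abs, abs_pow]
    rw [ContinuousLinearMap.norm_smulRight_apply, innerSL_apply_norm, hvnorm n]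
    rw [abs_of_nonneg (by norm_num : (0:ℝ) ≤ 1/2)]
    simp
  have hsummable : Summable f :=
    Summable.of_norm_bounded (summable_geometric_of_lt_one (by norm_num) (by norm_num)) hfnorm
  obtain ⟨A, hA⟩ : ∃ A : H →L[ℂ] H, HasSum f A := hsummable
  -- A is a compact operator
  have hfcomp : ∀ n, IsCompactOperator (f n) := by
    intro n
    rw [hf_def]
    simp only [ContinuousLinearMap.coe_smul]
    exact (aux_rank_one_compact (v n)).smul _
  have hpartial : ∀ N, IsCompactOperator ⇑(∑ n ∈ Finset.range N, f n) := by
    intro N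
    induction N with
    | zero => simpa using (isCompactOperator_zero (M₁ := H) (M₂ := H))
    | succ N ih =>
        rw [Finset.sum_range_succ]
        have hcoe : ⇑((∑ x ∈ Finset.range N, f x) + f N)
            = ⇑(∑ x ∈ Finset.range N, f x) + ⇑(f N) := rfl
        rw [hcoe]
        exact ih.add (hfcomp N)
  have hAcomp : IsCompactOperator A :=
    isCompactOperator_of_tendsto hA.tendsto_sum_nat (Filter.Eventually.of_forall hpartial)
  -- A is injective
  have hAzero : ∀ x : H, A x = 0 → x = 0 := by
    intro x hx
    apply hv_total
    intro m
    have hax : HasSum (fun n => f n x) (A x) :=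
      (ContinuousLinearMap.apply ℂ H x).hasSum hA
    have hax2 : HasSum (fun n => ⟪v m, f n x⟫) ⟪v m, A x⟫ :=
      (innerSL ℂ (v m)).hasSum hax
    have hite := orthonormal_iff_ite.mp hv_orth
    have hfun : ∀ n, ⟪v m, f n x⟫
        = if n = m then (((1/2 : ℝ) ^ m : ℝ) : ℂ) * ⟪v m, x⟫ else 0 := by
      intro n
      have hfx : f n x = (((1/2 : ℝ) ^ n : ℝ) : ℂ) • (⟪v n, x⟫ • v n) := by
        rw [hf_def]
        simp only [ContinuousLinearMap.smul_apply, ContinuousLinearMap.smulRight_apply,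
          innerSL_apply_apply]
        rw [RCLike.real_smul_eq_coe_smul (K := ℂ)]; norm_cast
      rw [hfx, inner_smul_right, inner_smul_right, hite m n]
      by_cases hnm : n = m
      · subst hnm; simp [mul_comm]
      · simp [hnm, Ne.symm hnm]
    simp only [hfun] at hax2
    have huniq := hax2.unique (hasSum_ite_eq m ((((1/2 : ℝ) ^ m : ℝ) : ℂ) * ⟪v m, x⟫))
    rw [hx, inner_zero_right] at huniq
    have hc : (((1/2 : ℝ) ^ m : ℝ) : ℂ) ≠ 0 := by
      simp only [ne_eq, Complex.ofReal_eq_zero]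
      positivity
    exact (mul_eq_zero.mp huniq.symm).resolve_left hc
  have hAinj : Function.Injective A := by
    intro x y hxy
    have h0 : A (x - y) = 0 := by rw [map_sub, hxy, sub_self]
    exact sub_eq_zero.mp (hAzero _ h0)
  -- conclude
  have hTAS := h A hAcomp hAinj
  have hSinj : Function.Injective S := by
    intro x y hxy
    apply hTAS
    simp [hxy]
  ext x
  apply hSinj
  have := congrArg (fun g : H →L[ℂ] H => g (S x)) hST
  simpa using this
end

section
/- Let X be a compact Hausdorff space such that for every x ∈ X there is a continuous function f : X → ℂ with f(x) ≠ f(y) for all y ≠ x. If Φ : C(X) → C(X) is a linear map such that for every f ∈ C(X) there exist a homeomorphism ψ_f : X → X and a unimodular τ_f ∈ C(X) with Φ(f) = τ_f · (f ∘ ψ_f), then Φ itself is of the form Φ(f) = τ · (f ∘ ψ) for a fixed unimodular τ ∈ C(X) and homeomorphism ψ of X — in particular Φ is a surjective isometry. -/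
open Complex ContinuousMap

namespace Stmt18Aux

variable {X : Type*} [TopologicalSpace X]

noncomputable def RC (H : C(X, ℝ)) : C(X, ℂ) :=
  ⟨fun y => (H y : ℂ), Complex.continuous_ofReal.comp H.continuous⟩

@[simp] lemma RC_apply (H : C(X, ℝ)) (y : X) : RC H y = (H y : ℂ) := rfl

lemma RC_add (H K : C(X, ℝ)) : RC (H + K) = RC H + RC K := by
  ext y; push_cast [RC_apply]; simp

lemma RC_mul (H K : C(X, ℝ)) : RC (H * K) = RC H * RC K := by
  ext y; push_cast [RC_apply]; simp

variable [CompactSpace X] [Nonempty X]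

lemma diskA (L : C(X, ℂ) →ₗ[ℂ] ℂ) (hL1 : L 1 = 1)
    (hL : ∀ f : C(X, ℂ), ∃ q : X, ‖L f‖ = ‖f q‖) :
    ∀ (f : C(X, ℂ)) (c : ℂ) (r : ℝ), (∀ y, ‖f y - c‖ ≤ r) → ‖L f - c‖ ≤ r := by
  intro f c r h
  obtain ⟨q, hq⟩ := hL (f - c • 1)
  have h2 : L (f - c • 1) = L f - c := by
    rw [map_sub, map_smul, hL1, smul_eq_mul, mul_one]
  rw [h2] at hq
  rw [hq]
  simpa using h q

lemma imZero (L : C(X, ℂ) →ₗ[ℂ] ℂ) (hL1 : L 1 = 1)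
    (hL : ∀ f : C(X, ℂ), ∃ q : X, ‖L f‖ = ‖f q‖) (H : C(X, ℝ)) :
    (L (RC H)).im = 0 := by
  set a := L (RC H) with ha
  set M := ‖H‖ with hM
  have key : ∀ t : ℝ, (a.im - t) ^ 2 ≤ M ^ 2 + t ^ 2 := by
    intro t
    have h1 : ‖a - (t : ℂ) * I‖ ≤ Real.sqrt (M ^ 2 + t ^ 2) := by
      apply diskA L hL1 hL
      intro y
      rw [Real.le_sqrt (norm_nonneg _) (by positivity)]
      have e : RC H y - (t : ℂ) * I = (H y : ℂ) + (-t : ℝ) * I := by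
        push_cast [RC_apply]; ring
      rw [e, Complex.sq_norm, Complex.normSq_add_mul_I]
      have hb : |H y| ≤ M := by
        have := H.norm_coe_le_norm y
        simpa [Real.norm_eq_abs] using this
      nlinarith [abs_nonneg (H y), _root_.sq_abs (H y)]
    have h2 : ‖a - (t : ℂ) * I‖ ^ 2 = a.re ^ 2 + (a.im - t) ^ 2 := by
      have e : a - (t : ℂ) * I = (a.re : ℂ) + ((a.im - t : ℝ)) * I := by
        apply Complex.ext <;> simp
      rw [e, Complex.sq_norm, Complex.normSq_add_mul_I]
    nlinarith [Real.sq_sqrt (by positivity : (0:ℝ) ≤ M ^ 2 + t ^ 2), norm_nonneg (a - (t : ℂ) * I),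
      Real.sqrt_nonneg (M ^ 2 + t ^ 2)]
  by_contra him
  have hkey := key ((a.im ^ 2 - M ^ 2 - 1) / (2 * a.im))
  have h2 : 2 * a.im * ((a.im ^ 2 - M ^ 2 - 1) / (2 * a.im)) = a.im ^ 2 - M ^ 2 - 1 := by
    field_simp
  nlinarith [hkey]

lemma nonnegZero (L : C(X, ℂ) →ₗ[ℂ] ℂ) (hL1 : L 1 = 1)
    (hL : ∀ f : C(X, ℂ), ∃ q : X, ‖L f‖ = ‖f q‖) (G : C(X, ℂ))
    (him : ∀ y, (G y).im = 0) (hre : ∀ y, 0 ≤ (G y).re) (hz : L G = 0) :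
    ∃ y, G y = 0 := by
  obtain ⟨y₀, -, hy₀⟩ := isCompact_univ.exists_isMinOn Set.univ_nonempty
    ((Complex.continuous_re.comp G.continuous).continuousOn)
  set δ := (G y₀).re with hδ
  set M := ‖G‖ with hM
  have hδ0 : 0 ≤ δ := hre y₀
  have hup : ∀ y, (G y).re ≤ M := fun y =>
    le_trans (Complex.re_le_norm _) (G.norm_coe_le_norm y)
  have hlow : ∀ y, δ ≤ (G y).re := fun y => hy₀ (Set.mem_univ y)
  have hδM : δ ≤ M := hup y₀
  have hA : ‖L G - (((M + δ) / 2 : ℝ) : ℂ)‖ ≤ (M - δ) / 2 := by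
    apply diskA L hL1 hL
    intro y
    have e : G y = ((G y).re : ℂ) := Complex.ext rfl (by simp [him y])
    rw [e]
    have : (((G y).re : ℂ)) - (((M + δ) / 2 : ℝ) : ℂ) = (((G y).re - (M + δ) / 2 : ℝ) : ℂ) := by
      push_cast; ring
    rw [this, Complex.norm_real, Real.norm_eq_abs, abs_le]
    constructor <;> [linarith [hlow y]; linarith [hup y]]
  rw [hz] at hA
  rw [zero_sub, norm_neg, Complex.norm_real, Real.norm_eq_abs,
    _root_.abs_of_nonneg (by linarith [norm_nonneg G] : (0:ℝ) ≤ (M + δ) / 2)] at hA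
  have hδz : δ = 0 := le_antisymm (by linarith) hδ0
  exact ⟨y₀, Complex.ext (by simpa using hδz) (him y₀)⟩

lemma squareL (L : C(X, ℂ) →ₗ[ℂ] ℂ) (hL1 : L 1 = 1)
    (hL : ∀ f : C(X, ℂ), ∃ q : X, ‖L f‖ = ‖f q‖) (H : C(X, ℝ)) :
    L (RC (H * H)) = (L (RC H)) ^ 2 := by
  set a := L (RC H) with haa'
  set b := L (RC (H * H)) with hbb'
  set M := ‖H‖ with hM
  have hMnn : (0:ℝ) ≤ M := norm_nonneg _
  have ha : a.im = 0 := imZero L hL1 hL H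
  have hb : b.im = 0 := imZero L hL1 hL (H * H)
  set α := a.re with hα
  set β := b.re with hβ
  have haa : a = (α : ℂ) := Complex.ext rfl (by simp [ha])
  have hbb : b = (β : ℂ) := Complex.ext rfl (by simp [hb])
  have key : ∀ t : ℝ, 0 < t → t ≤ 1 → t * M ≤ 1 →
      |α ^ 2 - β| ≤ t * (3 * M ^ 3 + β ^ 2 / 4) := by
    intro t ht ht1 htM
    set u : C(X, ℂ) := ⟨fun y => Complex.exp (((t * H y : ℝ) : ℂ) * I), by fun_prop⟩ with hu
    have hnorm1 : ‖L u‖ = 1 := by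
      obtain ⟨q, hq⟩ := hL u
      rw [hq]
      show ‖Complex.exp _‖ = 1
      rw [Complex.norm_exp_ofReal_mul_I]
    set w : C(X, ℂ) := u - (1 + (((t : ℂ)) * I) • RC H + (-(t:ℂ) ^ 2 / 2) • RC (H * H)) with hw
    have hwb : ∀ y, ‖w y‖ ≤ t ^ 3 * M ^ 3 := by
      intro y
      have habs : ‖(((t * H y : ℝ) : ℂ) * I)‖ ≤ 1 := by
        rw [norm_mul, Complex.norm_I, mul_one, Complex.norm_real, Real.norm_eq_abs, abs_mul, abs_of_pos ht]
        calc t * |H y| ≤ t * M := by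
              have := H.norm_coe_le_norm y
              rw [Real.norm_eq_abs] at this
              exact mul_le_mul_of_nonneg_left this ht.le
        _ ≤ 1 := htM
      have hbnd := Complex.exp_bound habs (by norm_num : 0 < 3)
      have hsum : ∑ m ∈ Finset.range 3, (((t * H y : ℝ) : ℂ) * I) ^ m / m.factorial
          = 1 + ((t : ℂ) * I) * (H y : ℂ) + (-(t:ℂ) ^ 2 / 2) * ((H y : ℂ) * (H y : ℂ)) := by
        rw [Finset.sum_range_succ, Finset.sum_range_succ, Finset.sum_range_one]
        simp [Nat.factorial]
        push_cast
        linear_combination ((t:ℂ) ^ 2 * (H y : ℂ) ^ 2 / 2) * Complex.I_sq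
      have hwy : w y = Complex.exp (((t * H y : ℝ) : ℂ) * I)
          - ∑ m ∈ Finset.range 3, (((t * H y : ℝ) : ℂ) * I) ^ m / m.factorial := by
        rw [hsum]
        simp only [hw, hu, ContinuousMap.sub_apply, ContinuousMap.add_apply,
          ContinuousMap.smul_apply, ContinuousMap.one_apply, ContinuousMap.coe_mk, RC_apply,
          ContinuousMap.mul_apply, smul_eq_mul]
        push_cast
        ring
      have habs2 : ‖(((t * H y : ℝ) : ℂ) * I)‖ = t * |H y| := by
        rw [norm_mul, Complex.norm_I, mul_one, Complex.norm_real, Real.norm_eq_abs, abs_mul, abs_of_pos ht]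
      have hHyM : |H y| ≤ M := by
        have := H.norm_coe_le_norm y
        rwa [Real.norm_eq_abs] at this
      calc ‖w y‖ = ‖(Complex.exp (((t * H y : ℝ) : ℂ) * I)
            - ∑ m ∈ Finset.range 3, (((t * H y : ℝ) : ℂ) * I) ^ m / m.factorial)‖ := by
            rw [hwy]
        _ ≤ ‖(((t * H y : ℝ) : ℂ) * I)‖ ^ 3 * ((Nat.succ 3 : ℝ) * ((Nat.factorial 3 : ℝ) * 3)⁻¹) := hbnd
        _ ≤ ‖(((t * H y : ℝ) : ℂ) * I)‖ ^ 3 * 1 := by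
            apply mul_le_mul_of_nonneg_left _ (by positivity)
            norm_num [Nat.factorial]
        _ = (t * |H y|) ^ 3 := by rw [mul_one, habs2]
        _ ≤ (t * M) ^ 3 := by
            apply pow_le_pow_left₀ (by positivity)
            exact mul_le_mul_of_nonneg_left hHyM ht.le
        _ = t ^ 3 * M ^ 3 := by ring
    have hwn : ‖L w‖ ≤ t ^ 3 * M ^ 3 := by
      obtain ⟨q, hq⟩ := hL w
      rw [hq]; exact hwb q
    have hLu : L u = 1 + (t : ℂ) * I * a + (-(t:ℂ) ^ 2 / 2) * b + L w := by
      have he : u = w + (1 + (((t : ℂ)) * I) • RC H + (-(t:ℂ) ^ 2 / 2) • RC (H * H)) := by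
        rw [hw]; ring
      rw [he, map_add, map_add, map_add, map_smul, map_smul, hL1]
      simp only [smul_eq_mul]
      ring
    set z : ℂ := 1 + (t : ℂ) * I * a + (-(t:ℂ) ^ 2 / 2) * b with hz
    have hz1 : |‖z‖ - 1| ≤ t ^ 3 * M ^ 3 := by
      have hdiff : z - L u = - L w := by rw [hLu]; ring
      calc |‖z‖ - 1| = |‖z‖ - ‖L u‖| := by rw [hnorm1]
        _ ≤ ‖z - L u‖ := abs_norm_sub_norm_le _ _
        _ = ‖L w‖ := by rw [hdiff, norm_neg]
        _ ≤ _ := hwn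
    have hzsq : ‖z‖ ^ 2 = (1 - t ^ 2 * β / 2) ^ 2 + (t * α) ^ 2 := by
      have hzeq : z = ((1 - t ^ 2 * β / 2 : ℝ) : ℂ) + ((t * α : ℝ) : ℂ) * I := by
        rw [hz, haa, hbb]; push_cast; ring
      rw [hzeq, Complex.sq_norm, Complex.normSq_add_mul_I]
    have htM3 : t ^ 3 * M ^ 3 ≤ 1 := by
      have : (t * M) ^ 3 ≤ 1 ^ 3 := pow_le_pow_left₀ (by positivity) htM 3
      calc t ^ 3 * M ^ 3 = (t * M) ^ 3 := by ring
        _ ≤ 1 ^ 3 := this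
        _ = 1 := one_pow 3
    have hznorm : ‖z‖ ≤ 2 := by
      have := abs_le.mp hz1
      linarith [this.2]
    have hzsq1 : |‖z‖ ^ 2 - 1| ≤ 3 * (t ^ 3 * M ^ 3) := by
      have e : ‖z‖ ^ 2 - 1 = (‖z‖ - 1) * (‖z‖ + 1) := by ring
      rw [e, abs_mul]
      have h1 : |‖z‖ + 1| ≤ 3 := by
        rw [_root_.abs_of_nonneg (by linarith [norm_nonneg z])]
        linarith
      calc |‖z‖ - 1| * |‖z‖ + 1| ≤ (t ^ 3 * M ^ 3) * 3 :=
          mul_le_mul hz1 h1 (abs_nonneg _) (by positivity)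
        _ = 3 * (t ^ 3 * M ^ 3) := by ring
    -- ‖z‖^2 - 1 = t^2 (α^2 - β) + t^4 β^2/4
    have hid : ‖z‖ ^ 2 - 1 = t ^ 2 * (α ^ 2 - β) + t ^ 4 * β ^ 2 / 4 := by
      rw [hzsq]; ring
    have h5 : t ^ 2 * |α ^ 2 - β| ≤ 3 * (t ^ 3 * M ^ 3) + t ^ 4 * β ^ 2 / 4 := by
      have : |t ^ 2 * (α ^ 2 - β)| ≤ |‖z‖ ^ 2 - 1| + t ^ 4 * β ^ 2 / 4 := by
        rw [hid]
        have := abs_add_le (t ^ 2 * (α ^ 2 - β) + t ^ 4 * β ^ 2 / 4) (-(t ^ 4 * β ^ 2 / 4))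
        simp only [add_neg_cancel_right] at this
        calc |t ^ 2 * (α ^ 2 - β)| ≤ |t ^ 2 * (α ^ 2 - β) + t ^ 4 * β ^ 2 / 4| + |-(t ^ 4 * β ^ 2 / 4)| := this
          _ = _ := by rw [abs_neg, _root_.abs_of_nonneg (by positivity : (0:ℝ) ≤ t ^ 4 * β ^ 2 / 4)]
      rw [abs_mul, _root_.abs_of_nonneg (by positivity : (0:ℝ) ≤ t ^ 2)] at this
      linarith [hzsq1]
    -- divide by t^2
    have h6 : |α ^ 2 - β| ≤ 3 * (t * M ^ 3) + t ^ 2 * β ^ 2 / 4 := by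
      have ht2 : (0:ℝ) < t ^ 2 := by positivity
      nlinarith [h5]
    calc |α ^ 2 - β| ≤ 3 * (t * M ^ 3) + t ^ 2 * β ^ 2 / 4 := h6
      _ ≤ t * (3 * M ^ 3 + β ^ 2 / 4) := by nlinarith [mul_nonneg (mul_nonneg ht.le (sub_nonneg.mpr ht1)) (sq_nonneg β)]
  -- conclude α ^ 2 = β
  have hfinal : α ^ 2 = β := by
    by_contra hne
    have hpos : 0 < |α ^ 2 - β| := abs_pos.mpr (sub_ne_zero.mpr hne)
    set D : ℝ := 3 * M ^ 3 + β ^ 2 / 4 + 1 with hD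
    have hDpos : 0 < D := by positivity
    set t : ℝ := min 1 (min (1 / (M + 1)) (|α ^ 2 - β| / (2 * D))) with htdef
    have ht0 : 0 < t := by
      apply lt_min (by norm_num)
      exact lt_min (by positivity) (by positivity)
    have ht1 : t ≤ 1 := min_le_left _ _
    have htM : t * M ≤ 1 := by
      have h1 : t ≤ 1 / (M + 1) := le_trans (min_le_right _ _) (min_le_left _ _)
      have : t * M ≤ (1 / (M + 1)) * M := mul_le_mul_of_nonneg_right h1 hMnn
      calc t * M ≤ (1 / (M + 1)) * M := this
        _ ≤ 1 := by
          rw [div_mul_eq_mul_div, one_mul, div_le_one (by linarith)]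
          linarith
    have hk := key t ht0 ht1 htM
    have h2 : t ≤ |α ^ 2 - β| / (2 * D) := le_trans (min_le_right _ _) (min_le_right _ _)
    have h3 : t * (3 * M ^ 3 + β ^ 2 / 4) ≤ t * D := by
      apply mul_le_mul_of_nonneg_left _ ht0.le
      rw [hD]; linarith
    have h4 : t * D ≤ |α ^ 2 - β| / 2 := by
      have := mul_le_mul_of_nonneg_right h2 hDpos.le
      calc t * D ≤ (|α ^ 2 - β| / (2 * D)) * D := this
        _ = |α ^ 2 - β| / 2 := by field_simp
    linarith
  rw [hbb, haa, ← hfinal]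
  push_cast
  ring

lemma mulReal (L : C(X, ℂ) →ₗ[ℂ] ℂ) (hL1 : L 1 = 1)
    (hL : ∀ f : C(X, ℂ), ∃ q : X, ‖L f‖ = ‖f q‖) (H K : C(X, ℝ)) :
    L (RC (H * K)) = L (RC H) * L (RC K) := by
  have hsplit : RC ((H + K) * (H + K)) = RC (H * H) + RC (H * K) + RC (H * K) + RC (K * K) := by
    have e : (H + K) * (H + K) = H * H + H * K + H * K + K * K := by ring
    rw [e, RC_add, RC_add, RC_add]
  have h1 := squareL L hL1 hL (H + K)
  rw [hsplit, RC_add, map_add, map_add, map_add, map_add,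
    squareL L hL1 hL H, squareL L hL1 hL K] at h1
  linear_combination h1 / 2

noncomputable def reP (f : C(X, ℂ)) : C(X, ℝ) :=
  ⟨fun y => (f y).re, Complex.continuous_re.comp f.continuous⟩

noncomputable def imP (f : C(X, ℂ)) : C(X, ℝ) :=
  ⟨fun y => (f y).im, Complex.continuous_im.comp f.continuous⟩

lemma decomp (f : C(X, ℂ)) : f = RC (reP f) + I • RC (imP f) := by
  ext y
  simp only [ContinuousMap.add_apply, ContinuousMap.smul_apply, RC_apply, reP, imP,
    ContinuousMap.coe_mk, smul_eq_mul]
  rw [mul_comm, Complex.re_add_im]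

lemma Lmul (L : C(X, ℂ) →ₗ[ℂ] ℂ) (hL1 : L 1 = 1)
    (hL : ∀ f : C(X, ℂ), ∃ q : X, ‖L f‖ = ‖f q‖) (f g : C(X, ℂ)) :
    L (f * g) = L f * L g := by
  have hf := decomp f
  have hg := decomp g
  set A := reP f with hA
  set B := imP f with hB
  set C' := reP g with hC
  set D := imP g with hD
  have e : f * g = (RC (A * C') - RC (B * D)) + I • (RC (A * D) + RC (B * C')) := by
    rw [hf, hg, RC_mul, RC_mul, RC_mul, RC_mul]
    ext y
    simp only [ContinuousMap.mul_apply, ContinuousMap.add_apply, ContinuousMap.sub_apply,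
      ContinuousMap.smul_apply, smul_eq_mul]
    linear_combination ((RC B) y * (RC D) y) * Complex.I_sq
  rw [e, map_add, map_sub, map_smul, map_add, mulReal L hL1 hL, mulReal L hL1 hL,
    mulReal L hL1 hL, mulReal L hL1 hL]
  conv_rhs => rw [hf, hg]
  rw [map_add, map_smul, map_add, map_smul]
  simp only [smul_eq_mul]
  linear_combination (-(L (RC B) * L (RC D))) * Complex.I_sq

lemma Lreal (L : C(X, ℂ) →ₗ[ℂ] ℂ) (hL1 : L 1 = 1)
    (hL : ∀ f : C(X, ℂ), ∃ q : X, ‖L f‖ = ‖f q‖) (H : C(X, ℝ)) :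
    L (RC H) = (((L (RC H)).re : ℝ) : ℂ) :=
  Complex.ext rfl (by simp [imZero L hL1 hL H])

lemma Lstar (L : C(X, ℂ) →ₗ[ℂ] ℂ) (hL1 : L 1 = 1)
    (hL : ∀ f : C(X, ℂ), ∃ q : X, ‖L f‖ = ‖f q‖) (f : C(X, ℂ)) :
    L (star f) = star (L f) := by
  have hf := decomp f
  have hstar : star f = RC (reP f) - I • RC (imP f) := by
    ext y
    simp only [ContinuousMap.star_apply, ContinuousMap.sub_apply, ContinuousMap.smul_apply,
      RC_apply, reP, imP, ContinuousMap.coe_mk, smul_eq_mul]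
    conv_lhs => rw [← Complex.re_add_im (f y)]
    simp only [star_add, star_mul', RCLike.star_def, Complex.conj_ofReal, Complex.conj_I]
    ring
  rw [hstar, map_sub, map_smul]
  conv_rhs => rw [hf]
  rw [map_add, map_smul]
  rw [Lreal L hL1 hL (reP f), Lreal L hL1 hL (imP f)]
  simp only [smul_eq_mul, star_add, star_mul', RCLike.star_def, Complex.conj_ofReal,
    Complex.conj_I]
  ring

theorem core (L : C(X, ℂ) →ₗ[ℂ] ℂ) (hL1 : L 1 = 1)
    (hL : ∀ f : C(X, ℂ), ∃ q : X, ‖L f‖ = ‖f q‖) :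
    ∃ p : X, ∀ f : C(X, ℂ), L f = f p := by
  have hfin : ∀ u : Finset C(X, ℂ),
      ((Set.univ : Set X) ∩ ⋂ f ∈ u, {y | f y = L f}).Nonempty := by
    intro u
    set G : C(X, ℂ) := ∑ f ∈ u, (f - L f • 1) * star (f - L f • 1) with hG
    have hGy : ∀ y, G y = ∑ f ∈ u, ((Complex.normSq (f y - L f) : ℝ) : ℂ) := by
      intro y
      rw [hG]
      rw [ContinuousMap.coe_sum]
      rw [Finset.sum_apply]
      apply Finset.sum_congr rfl
      intro f _
      simp only [ContinuousMap.mul_apply, ContinuousMap.star_apply, ContinuousMap.sub_apply,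
        ContinuousMap.smul_apply, ContinuousMap.one_apply, smul_eq_mul, mul_one]
      rw [RCLike.star_def, Complex.mul_conj]
    have him : ∀ y, (G y).im = 0 := by
      intro y
      rw [hGy y, Complex.im_sum]
      apply Finset.sum_eq_zero
      intro f _
      simp
    have hre : ∀ y, 0 ≤ (G y).re := by
      intro y
      rw [hGy y, Complex.re_sum]
      apply Finset.sum_nonneg
      intro f _
      simp [Complex.normSq_nonneg]
    have hLzero : ∀ f ∈ u, L (f - L f • 1) = 0 := by
      intro f _
      rw [map_sub, map_smul, hL1, smul_eq_mul, mul_one, sub_self]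
    have hLG : L G = 0 := by
      rw [hG, map_sum]
      apply Finset.sum_eq_zero
      intro f hf
      rw [Lmul L hL1 hL, hLzero f hf, zero_mul]
    obtain ⟨y₀, hy₀⟩ := nonnegZero L hL1 hL G him hre hLG
    refine ⟨y₀, Set.mem_inter (Set.mem_univ _) ?_⟩
    simp only [Set.mem_iInter, Set.mem_setOf_eq]
    intro f hf
    have h0 : ∑ g ∈ u, Complex.normSq (g y₀ - L g) = 0 := by
      have h1 := hGy y₀
      rw [hy₀] at h1
      have h2 := congrArg Complex.re h1
      rw [Complex.re_sum] at h2
      simp only [Complex.zero_re, Complex.ofReal_re] at h2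
      exact h2.symm
    have h3 := (Finset.sum_eq_zero_iff_of_nonneg
      (fun g _ => Complex.normSq_nonneg _)).mp h0 f hf
    have h4 := Complex.normSq_eq_zero.mp h3
    exact sub_eq_zero.mp h4
  by_contra hcon
  push_neg at hcon
  have hempty : (Set.univ : Set X) ∩ ⋂ f : C(X, ℂ), {y | f y = L f} = ∅ := by
    rw [Set.eq_empty_iff_forall_notMem]
    intro p hp
    obtain ⟨f, hfne⟩ := hcon p
    have := hp.2
    rw [Set.mem_iInter] at this
    exact hfne ((this f).symm)
  obtain ⟨u, hu⟩ := isCompact_univ.elim_finite_subfamily_closed _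
    (fun f : C(X, ℂ) => isClosed_eq f.continuous continuous_const) hempty
  have := hfin u
  rw [hu] at this
  exact Set.not_nonempty_empty this

end Stmt18Aux

theorem stmt18 {X : Type*} [TopologicalSpace X] [CompactSpace X] [T2Space X]
    (hsep : ∀ x : X, ∃ f : C(X, ℂ), ∀ y : X, y ≠ x → f y ≠ f x)
    (Φ : C(X, ℂ) →ₗ[ℂ] C(X, ℂ))
    (hloc : ∀ f : C(X, ℂ), ∃ (ψ : X ≃ₜ X) (τ : C(X, ℂ)),
      (∀ x, ‖τ x‖ = 1) ∧ Φ f = τ * f.comp (ψ : C(X, X))) :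
    ∃ (ψ : X ≃ₜ X) (τ : C(X, ℂ)), (∀ x, ‖τ x‖ = 1) ∧
      ∀ f : C(X, ℂ), Φ f = τ * f.comp (ψ : C(X, X)) := by
  rcases isEmpty_or_nonempty X with hX | hX
  · haveI : Subsingleton C(X, ℂ) := ⟨fun f g => ContinuousMap.ext fun x => isEmptyElim x⟩
    exact ⟨Homeomorph.refl X, 1, fun x => isEmptyElim x, fun f => Subsingleton.elim _ _⟩
  obtain ⟨ψ₁, τ₁, hτ₁, hΦ1⟩ := hloc 1
  have hone : (1 : C(X, ℂ)).comp (ψ₁ : C(X, X)) = 1 := by ext y; rfl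
  have hτeq : Φ 1 = τ₁ := by rw [hΦ1, hone, mul_one]
  set τ : C(X, ℂ) := Φ 1 with hτdef
  have hτ : ∀ x, ‖τ x‖ = 1 := fun x => by rw [hτeq]; exact hτ₁ x
  have hτne : ∀ x, τ x ≠ 0 := fun x h => by
    have := hτ x; rw [h, norm_zero] at this; norm_num at this
  -- pointwise representation
  have hmain : ∀ x : X, ∃ p : X, ∀ f, Φ f x = τ x * f p := by
    intro x
    set L : C(X, ℂ) →ₗ[ℂ] ℂ :=
      { toFun := fun f => (τ x)⁻¹ * Φ f x
        map_add' := by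
          intro f g
          show (τ x)⁻¹ * Φ (f + g) x = (τ x)⁻¹ * Φ f x + (τ x)⁻¹ * Φ g x
          rw [map_add, ContinuousMap.add_apply]; ring
        map_smul' := by
          intro c f
          show (τ x)⁻¹ * Φ (c • f) x = c • ((τ x)⁻¹ * Φ f x)
          rw [map_smul, ContinuousMap.smul_apply, smul_eq_mul, smul_eq_mul]; ring } with hLdef
    have hL1 : L 1 = 1 := by
      show (τ x)⁻¹ * Φ 1 x = 1
      rw [← hτdef]
      exact inv_mul_cancel₀ (hτne x)
    have hLp : ∀ f, ∃ q, ‖L f‖ = ‖f q‖ := by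
      intro f
      obtain ⟨ψf, τf, hτf, hf⟩ := hloc f
      refine ⟨ψf x, ?_⟩
      show ‖(τ x)⁻¹ * Φ f x‖ = _
      rw [hf]
      rw [norm_mul, norm_inv, hτ x, ContinuousMap.mul_apply, norm_mul, hτf x,
        ContinuousMap.comp_apply]
      simp
    obtain ⟨p, hp⟩ := Stmt18Aux.core L hL1 hLp
    refine ⟨p, fun f => ?_⟩
    have h1 : (τ x)⁻¹ * Φ f x = f p := hp f
    rw [← h1, ← mul_assoc, mul_inv_cancel₀ (hτne x), one_mul]
  choose ε hε using hmain
  -- injectivity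
  have hinj : Function.Injective ε := by
    intro x₁ x₂ he
    obtain ⟨g, hg⟩ := hsep (ε x₁)
    set f : C(X, ℂ) := g - g (ε x₁) • 1 with hfdef
    obtain ⟨ψf, τf, hτf, hf⟩ := hloc f
    have hτfne : ∀ x, τf x ≠ 0 := fun x h => by
      have := hτf x; rw [h, norm_zero] at this; norm_num at this
    have hz : ∀ x', ε x' = ε x₁ → ψf x' = ε x₁ := by
      intro x' hx'
      have h1 : Φ f x' = τ x' * f (ε x') := hε x' f
      have h2 : Φ f x' = τf x' * f (ψf x') := by
        rw [hf]; rfl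
      have hf0 : f (ε x') = 0 := by
        rw [hx', hfdef]
        simp
      have h3 : τf x' * f (ψf x') = 0 := by rw [← h2, h1, hf0, mul_zero]
      have hfψ : f (ψf x') = 0 := by
        rcases mul_eq_zero.mp h3 with h | h
        · exact absurd h (hτfne x')
        · exact h
      by_contra hne
      apply hg _ hne
      have : g (ψf x') - g (ε x₁) = 0 := by
        simpa [hfdef] using hfψ
      exact sub_eq_zero.mp this
    have e1 := hz x₁ rfl
    have e2 := hz x₂ he.symm
    exact ψf.injective (e1.trans e2.symm)
  -- surjectivity
  have hsurj : Function.Surjective ε := by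
    intro q
    obtain ⟨g, hg⟩ := hsep q
    set f : C(X, ℂ) := g - g q • 1 with hfdef
    obtain ⟨ψf, τf, hτf, hf⟩ := hloc f
    refine ⟨ψf.symm q, ?_⟩
    have h1 : Φ f (ψf.symm q) = τ (ψf.symm q) * f (ε (ψf.symm q)) := hε _ f
    have h2 : Φ f (ψf.symm q) = τf (ψf.symm q) * f (ψf (ψf.symm q)) := by
      rw [hf]; rfl
    rw [Homeomorph.apply_symm_apply] at h2
    have hfq : f q = 0 := by rw [hfdef]; simp
    have h3 : τ (ψf.symm q) * f (ε (ψf.symm q)) = 0 := by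
      rw [← h1, h2, hfq, mul_zero]
    have hfε : f (ε (ψf.symm q)) = 0 := by
      rcases mul_eq_zero.mp h3 with h | h
      · exact absurd h (hτne _)
      · exact h
    by_contra hne
    apply hg _ hne
    have : g (ε (ψf.symm q)) - g q = 0 := by simpa [hfdef] using hfε
    exact sub_eq_zero.mp this
  -- continuity
  have hcont : Continuous ε := by
    have he : Continuous (fun y : X => (fun f : C(X, ℂ) => f y)) :=
      continuous_pi fun f => f.continuous
    have hinj' : Function.Injective (fun y : X => (fun f : C(X, ℂ) => f y)) := by
      intro y₁ y₂ h
      by_contra hne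
      obtain ⟨g, hg⟩ := hsep y₂
      exact hg y₁ hne (congrFun h g)
    have hemb := (he.isClosedEmbedding hinj').isEmbedding
    rw [hemb.continuous_iff]
    have hcomp : ((fun y : X => (fun f : C(X, ℂ) => f y)) ∘ ε)
        = fun x => (fun f : C(X, ℂ) => (τ x)⁻¹ * Φ f x) := by
      funext x f
      show f (ε x) = (τ x)⁻¹ * Φ f x
      rw [hε x f, ← mul_assoc, inv_mul_cancel₀ (hτne x), one_mul]
    rw [hcomp]
    apply continuous_pi
    intro f
    exact (τ.continuous.inv₀ hτne).mul (Φ f).continuous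
  let E : X ≃ X := Equiv.ofBijective ε ⟨hinj, hsurj⟩
  have hcontE : Continuous E := hcont
  let ψ : X ≃ₜ X := Continuous.homeoOfEquivCompactToT2 (f := E) hcontE
  refine ⟨ψ, τ, hτ, fun f => ?_⟩
  ext x
  show Φ f x = (τ * f.comp (ψ : C(X, X))) x
  rw [ContinuousMap.mul_apply, ContinuousMap.comp_apply]
  exact hε x f
end
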